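/- Let V ≥ 1 be an integer, and for each channel c ∈ {1,…,V} let r_c > 0 be a real number, Λ_c > 0 a real number, and let R = ∑_{c=1}^V r_c, q > 0, and ℓ a real number. Define k*_c = (ℓ r_c)/R + (q r_c / R) · ∑_{j=1}^V r_j · log₂( (r_c Λ_j) / (r_j Λ_c) ). Then for every vector k ∈ ℝ^V with ∑_{c=1}^V k_c = ℓ, it holds that ∑_{c=1}^V Λ_c · 2^{k_c/(r_c q)} ≥ ∑_{c=1}^V Λ_c · 2^{k*_c/(r_c q)}. (Equivalently, the bit allocation k* maximizes the packet decoding probability exp(−(dᵅ/Γ)·∑_c Λ_c(2^{k_c/(r_c q)}−1)) over all allocations of ℓ bits, which is Lemma 1 of the paper.) -/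

import Mathlib

open Finset

/-- Lemma 1 of the paper: the closed-form allocation `kstar` minimizes
`∑ c, Λ c * 2 ^ (k c / (r c * q))` among all allocations of `ℓ` bits,
i.e. maximizes the packet decoding probability. -/
theorem stmt0 (V : ℕ) (hV : 1 ≤ V) (r Λ : Fin V → ℝ)
    (hr : ∀ c, 0 < r c) (hΛ : ∀ c, 0 < Λ c)
    (q ℓ : ℝ) (hq : 0 < q)
    (R : ℝ) (hR : R = ∑ c, r c)
    (kstar : Fin V → ℝ)
    (hkstar : ∀ c, kstar c =
      ℓ * r c / R + q * r c / R *
        ∑ j, r j * Real.logb 2 (r c * Λ j / (r j * Λ c)))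
    (k : Fin V → ℝ) (hk : ∑ c, k c = ℓ) :
    ∑ c, Λ c * (2 : ℝ) ^ (k c / (r c * q)) ≥
      ∑ c, Λ c * (2 : ℝ) ^ (kstar c / (r c * q)) := by
  have h2 : (0:ℝ) < 2 := by norm_num
  have h21 : (2:ℝ) ≠ 1 := by norm_num
  haveI : Nonempty (Fin V) := Fin.pos_iff_nonempty.mp (by omega)
  have hRpos : 0 < R := by
    rw [hR]; exact Finset.sum_pos (fun c _ => hr c) Finset.univ_nonempty
  have hRne : R ≠ 0 := hRpos.ne'
  have hqne : q ≠ 0 := hq.ne'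
  set T : ℝ := ∑ j, r j * (Real.logb 2 (Λ j) - Real.logb 2 (r j)) with hT
  set C' : ℝ := ℓ / (R * q) + T / R with hC'
  -- sum simplification
  have hS : ∀ c, (∑ j, r j * Real.logb 2 (r c * Λ j / (r j * Λ c)))
      = R * (Real.logb 2 (r c) - Real.logb 2 (Λ c)) + T := by
    intro c
    have key : ∀ j, r j * Real.logb 2 (r c * Λ j / (r j * Λ c))
        = r j * (Real.logb 2 (r c) - Real.logb 2 (Λ c))
          + r j * (Real.logb 2 (Λ j) - Real.logb 2 (r j)) := by
      intro j
      have h1 : Real.logb 2 (r c * Λ j / (r j * Λ c))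
          = (Real.logb 2 (r c) + Real.logb 2 (Λ j))
            - (Real.logb 2 (r j) + Real.logb 2 (Λ c)) := by
        rw [Real.logb_div (mul_pos (hr c) (hΛ j)).ne' (mul_pos (hr j) (hΛ c)).ne',
          Real.logb_mul (hr c).ne' (hΛ j).ne',
          Real.logb_mul (hr j).ne' (hΛ c).ne']
      rw [h1]; ring
    rw [Finset.sum_congr rfl (fun j _ => key j), Finset.sum_add_distrib,
      ← Finset.sum_mul, ← hR, ← hT]
  -- key exponent formula
  have hexp : ∀ c, kstar c / (r c * q)
      = Real.logb 2 (r c) + (C' + (- Real.logb 2 (Λ c))) := by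
    intro c
    have hrc : r c ≠ 0 := (hr c).ne'
    rw [hkstar c, hS c, hC']
    field_simp
    ring
  -- value at kstar
  have hval : ∀ c, Λ c * (2:ℝ) ^ (kstar c / (r c * q)) = r c * (2:ℝ) ^ C' := by
    intro c
    rw [hexp c, Real.rpow_add h2, Real.rpow_add h2,
      Real.rpow_logb h2 h21 (hr c), Real.rpow_neg h2.le,
      Real.rpow_logb h2 h21 (hΛ c)]
    have hΛc : Λ c ≠ 0 := (hΛ c).ne'
    field_simp
  -- sum of kstar equals ℓ
  have hsum : ∑ c, kstar c = ℓ := by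
    have h1 : ∀ c, kstar c
        = ℓ * r c / R + q * (r c * (Real.logb 2 (r c) - Real.logb 2 (Λ c)))
          + q * r c * T / R := by
      intro c
      rw [hkstar c, hS c]
      field_simp
      ring
    rw [Finset.sum_congr rfl (fun c _ => h1 c)]
    rw [Finset.sum_add_distrib, Finset.sum_add_distrib]
    have e1 : ∑ c, ℓ * r c / R = ℓ := by
      rw [← Finset.sum_div, ← Finset.mul_sum, ← hR]
      field_simp
    have e2 : ∑ c, q * (r c * (Real.logb 2 (r c) - Real.logb 2 (Λ c)))
        = - (q * T) := by
      have h5 : ∀ c : Fin V, q * (r c * (Real.logb 2 (r c) - Real.logb 2 (Λ c)))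
          = -(q * (r c * (Real.logb 2 (Λ c) - Real.logb 2 (r c)))) := fun c => by ring
      rw [Finset.sum_congr rfl (fun c _ => h5 c), Finset.sum_neg_distrib,
        ← Finset.mul_sum, ← hT]
    have e3 : ∑ c, q * r c * T / R = q * T := by
      have h4 : ∀ c, q * r c * T / R = (q * T / R) * r c := fun c => by ring
      rw [Finset.sum_congr rfl (fun c _ => h4 c), ← Finset.mul_sum, ← hR]
      field_simp
    rw [e1, e2, e3]; ring
  -- pointwise tangent-line bound
  have hpt : ∀ c, Λ c * (2:ℝ) ^ (kstar c / (r c * q))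
        + (Real.log 2 * (2:ℝ) ^ C' / q) * (k c - kstar c)
      ≤ Λ c * (2:ℝ) ^ (k c / (r c * q)) := by
    intro c
    have hrcq : r c * q ≠ 0 := (mul_pos (hr c) hq).ne'
    have hx : (2:ℝ) ^ (k c / (r c * q))
        = (2:ℝ) ^ (kstar c / (r c * q))
          * (2:ℝ) ^ ((k c - kstar c) / (r c * q)) := by
      rw [← Real.rpow_add h2]
      congr 1
      field_simp
      ring
    have hbound : (1 : ℝ) + Real.log 2 * ((k c - kstar c) / (r c * q))
        ≤ (2:ℝ) ^ ((k c - kstar c) / (r c * q)) := by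
      rw [Real.rpow_def_of_pos h2]
      have := Real.add_one_le_exp (Real.log 2 * ((k c - kstar c) / (r c * q)))
      linarith
    have hpos : 0 < Λ c * (2:ℝ) ^ (kstar c / (r c * q)) :=
      mul_pos (hΛ c) (Real.rpow_pos_of_pos h2 _)
    calc Λ c * (2:ℝ) ^ (kstar c / (r c * q))
          + (Real.log 2 * (2:ℝ) ^ C' / q) * (k c - kstar c)
        = (Λ c * (2:ℝ) ^ (kstar c / (r c * q)))
          * (1 + Real.log 2 * ((k c - kstar c) / (r c * q))) := by
          rw [hval c]
          have hrc : r c ≠ 0 := (hr c).ne'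
          field_simp
      _ ≤ (Λ c * (2:ℝ) ^ (kstar c / (r c * q)))
          * ((2:ℝ) ^ ((k c - kstar c) / (r c * q))) :=
          mul_le_mul_of_nonneg_left hbound hpos.le
      _ = Λ c * (2:ℝ) ^ (k c / (r c * q)) := by rw [hx]; ring
  -- conclude
  have hmain := Finset.sum_le_sum (s := Finset.univ) (fun c _ => hpt c)
  rw [Finset.sum_add_distrib, ← Finset.mul_sum, Finset.sum_sub_distrib,
    hk, hsum, sub_self, mul_zero, add_zero] at hmain
  exact hmain
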